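/- Let τ ∈ (−1/2, 0), so q = exp(2πiτ) has |q| = 1 and q ≠ ±1, and let λ ∈ ℂ. Define the operators (X⁺_λ f)(z) = q^{z}·( q^{−1/2−iλ}f(z−1) − q^{1/2+iλ}f(z+1) )/(q^{−1}−q) and (X⁻_λ f)(z) = q^{−z}·( q^{−1/2−iλ}f(z+1) − q^{1/2+iλ}f(z−1) )/(q^{−1}−q). Suppose f and g are meromorphic on ℂ with growth rates ε_f and ε_g at ±i∞ respectively, that ε_f + ε_g < 2πτ, and that f and g are analytic on the strip {z ∈ ℂ : |Re(z)| ≤ 1}. Then all the integrals below over the imaginary axis converge absolutely and ∫_{−i∞}^{i∞} (X⁺_λ f)(z)·g(z) dz = −∫_{−i∞}^{i∞} f(z)·(X⁺_{−λ} g)(z) dz, ∫_{−i∞}^{i∞} (X⁻_λ f)(z)·g(z) dz = −∫_{−i∞}^{i∞} f(z)·(X⁻_{−λ} g)(z) dz, and ∫_{−i∞}^{i∞} f(z+1)·g(z) dz = ∫_{−i∞}^{i∞} f(z)·g(z−1) dz. -/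

import Mathlib

noncomputable section

open Complex MeasureTheory Set Filter Topology
open scoped Interval

/-- `q^u = exp(2πiτu)`. -/
def qpow (τ u : ℂ) : ℂ := Complex.exp (2 * (Real.pi : ℂ) * Complex.I * τ * u)

/-- `(X⁺_λ f)(z) = q^z·(q^{−1/2−iλ}f(z−1) − q^{1/2+iλ}f(z+1))/(q^{−1}−q)`. -/
def Xplus (τ lam : ℂ) (f : ℂ → ℂ) (z : ℂ) : ℂ :=
  qpow τ z * (qpow τ (-(1 / 2) - Complex.I * lam) * f (z - 1) -
      qpow τ (1 / 2 + Complex.I * lam) * f (z + 1)) / (qpow τ (-1) - qpow τ 1)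

/-- `(X⁻_λ f)(z) = q^{−z}·(q^{−1/2−iλ}f(z+1) − q^{1/2+iλ}f(z−1))/(q^{−1}−q)`. -/
def Xminus (τ lam : ℂ) (f : ℂ → ℂ) (z : ℂ) : ℂ :=
  qpow τ (-z) * (qpow τ (-(1 / 2) - Complex.I * lam) * f (z + 1) -
      qpow τ (1 / 2 + Complex.I * lam) * f (z - 1)) / (qpow τ (-1) - qpow τ 1)

/-- A meromorphic function `f` has (exponential) growth rate `ε` at `±i∞`:
its singularities lie in a horizontal band `{Im z ∈ K}`, `K` compact, and
`|f(x+iy)| = O(exp(ε|y|))` as `y → ±∞`, uniformly for `x` in compacts of `ℝ`. -/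
def HasGrowthRate (f : ℂ → ℂ) (ε : ℝ) : Prop :=
  (∃ K : Set ℝ, IsCompact K ∧ ∀ z : ℂ, z.im ∉ K → AnalyticAt ℂ f z) ∧
  ∀ A : Set ℝ, IsCompact A → ∃ C M : ℝ, ∀ z : ℂ, z.re ∈ A → M ≤ |z.im| →
    ‖f z‖ ≤ C * Real.exp (ε * |z.im|)

lemma qpow_add (τ a b : ℂ) : qpow τ (a + b) = qpow τ a * qpow τ b := by
  simp [qpow, mul_add, Complex.exp_add]

lemma qpow_zero (τ : ℂ) : qpow τ 0 = 1 := by simp [qpow]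

lemma qpow_one_mul_neg_one (τ : ℂ) : qpow τ 1 * qpow τ (-1) = 1 := by
  rw [← qpow_add]; norm_num [qpow]


lemma integrable_exp_neg_abs {δ : ℝ} (hδ : 0 < δ) :
    Integrable (fun y : ℝ => Real.exp (-δ * |y|)) := by
  have h1 : IntegrableOn (fun y : ℝ => Real.exp (-δ * |y|)) (Ioi (0:ℝ)) :=
    (exp_neg_integrableOn_Ioi 0 hδ).congr_fun
      (fun x hx => by rw [abs_of_pos (mem_Ioi.mp hx)]) measurableSet_Ioi
  have h2 : IntegrableOn (fun y : ℝ => Real.exp (-δ * |y|)) (Iio (0:ℝ)) := by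
    have hmp : MeasurePreserving (Neg.neg : ℝ → ℝ) volume volume :=
      Measure.measurePreserving_neg _
    have hme : MeasurableEmbedding (Neg.neg : ℝ → ℝ) :=
      (Homeomorph.neg ℝ).measurableEmbedding
    have := (hmp.integrableOn_comp_preimage hme).mpr h1
    simp only [Set.neg_preimage] at this ⊢
    have hpre : -Ioi (0:ℝ) = Iio 0 := by
      ext x; simp
    rw [hpre] at this
    refine this.congr_fun (fun x _ => ?_) measurableSet_Iio
    simp [Function.comp, abs_neg]
  have h2' : IntegrableOn (fun y : ℝ => Real.exp (-δ * |y|)) (Iic (0:ℝ)) := by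
    rwa [integrableOn_Iic_iff_integrableOn_Iio]
  rw [← integrableOn_univ, ← Set.Iic_union_Ioi (a := (0:ℝ))]
  exact h2'.union h1

lemma vert_line_integrable (h : ℂ → ℂ) (x₀ x₁ : ℝ)
    (hd : ∀ z : ℂ, z.re ∈ Set.Icc x₀ x₁ → DifferentiableAt ℂ h z)
    (C δ M : ℝ) (hδ : 0 < δ)
    (hb : ∀ z : ℂ, z.re ∈ Set.Icc x₀ x₁ → M ≤ |z.im| → ‖h z‖ ≤ C * Real.exp (-δ * |z.im|))
    (x : ℝ) (hx : x ∈ Set.Icc x₀ x₁) :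
    Integrable (fun y : ℝ => h (x + y * Complex.I)) := by
  set M' : ℝ := max M 0 with hM'
  have hre : ∀ y : ℝ, ((x : ℂ) + y * Complex.I).re = x := by intro y; simp
  have him : ∀ y : ℝ, ((x : ℂ) + y * Complex.I).im = y := by intro y; simp
  have hinner : Continuous (fun y : ℝ => (x : ℂ) + y * Complex.I) := by fun_prop
  have hc : Continuous (fun y : ℝ => h ((x : ℂ) + y * Complex.I)) := by
    rw [continuous_iff_continuousAt]
    intro y
    have hmem : ((x : ℂ) + y * Complex.I).re ∈ Set.Icc x₀ x₁ := by rw [hre]; exact hx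
    exact ContinuousAt.comp (hd _ hmem).continuousAt hinner.continuousAt
  obtain ⟨S, hS⟩ := (isCompact_Icc (a := -M') (b := M')).exists_bound_of_continuousOn
    hc.continuousOn
  set C₂ : ℝ := max |C| (max S 0 * Real.exp (δ * M')) with hC₂
  have hbound : ∀ y : ℝ, ‖h ((x : ℂ) + y * Complex.I)‖ ≤ C₂ * Real.exp (-δ * |y|) := by
    intro y
    rcases le_or_gt (|y|) M' with hy | hy
    · have hyIcc : y ∈ Set.Icc (-M') M' := abs_le.mp hy
      have h1 : ‖h ((x : ℂ) + y * Complex.I)‖ ≤ max S 0 := (hS y hyIcc).trans (le_max_left _ _)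
      have h2 : (1 : ℝ) ≤ Real.exp (δ * M') * Real.exp (-δ * |y|) := by
        rw [← Real.exp_add]
        apply Real.one_le_exp
        nlinarith [abs_nonneg y]
      calc ‖h ((x : ℂ) + y * Complex.I)‖ ≤ max S 0 := h1
        _ ≤ max S 0 * (Real.exp (δ * M') * Real.exp (-δ * |y|)) :=
            le_mul_of_one_le_right (le_max_right _ _) h2
        _ = max S 0 * Real.exp (δ * M') * Real.exp (-δ * |y|) := by ring
        _ ≤ C₂ * Real.exp (-δ * |y|) :=
            mul_le_mul_of_nonneg_right (le_max_right _ _) (Real.exp_nonneg _)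
    · have hmem : ((x : ℂ) + y * Complex.I).re ∈ Set.Icc x₀ x₁ := by rw [hre]; exact hx
      have hM : M ≤ |((x : ℂ) + y * Complex.I).im| := by
        rw [him]; exact le_trans (le_max_left _ _) hy.le
      have hb' := hb _ hmem hM
      rw [him] at hb'
      calc ‖h ((x : ℂ) + y * Complex.I)‖ ≤ C * Real.exp (-δ * |y|) := hb'
        _ ≤ C₂ * Real.exp (-δ * |y|) :=
            mul_le_mul_of_nonneg_right (le_trans (le_abs_self C) (le_max_left _ _))
              (Real.exp_nonneg _)
  exact Integrable.mono' ((integrable_exp_neg_abs hδ).const_mul C₂)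
    hc.aestronglyMeasurable (Filter.Eventually.of_forall hbound)

lemma vert_shift (h : ℂ → ℂ) (x₀ x₁ : ℝ) (hx : x₀ ≤ x₁)
    (hd : ∀ z : ℂ, z.re ∈ Set.Icc x₀ x₁ → DifferentiableAt ℂ h z)
    (C δ M : ℝ) (hδ : 0 < δ)
    (hb : ∀ z : ℂ, z.re ∈ Set.Icc x₀ x₁ → M ≤ |z.im| → ‖h z‖ ≤ C * Real.exp (-δ * |z.im|)) :
    (∫ y : ℝ, h (x₀ + y * Complex.I)) = ∫ y : ℝ, h (x₁ + y * Complex.I) := by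
  have hInt₀ := vert_line_integrable h x₀ x₁ hd C δ M hδ hb x₀ ⟨le_refl _, hx⟩
  have hInt₁ := vert_line_integrable h x₀ x₁ hd C δ M hδ hb x₁ ⟨hx, le_refl _⟩
  set B : ℝ → ℝ → ℂ := fun x T => ∫ y in (-T)..T, h (x + y * Complex.I) with hB
  have lim₀ : Tendsto (fun T : ℝ => B x₀ T) atTop (𝓝 (∫ y : ℝ, h (x₀ + y * Complex.I))) :=
    intervalIntegral_tendsto_integral hInt₀ tendsto_neg_atTop_atBot tendsto_id
  have lim₁ : Tendsto (fun T : ℝ => B x₁ T) atTop (𝓝 (∫ y : ℝ, h (x₁ + y * Complex.I))) :=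
    intervalIntegral_tendsto_integral hInt₁ tendsto_neg_atTop_atBot tendsto_id
  set M' : ℝ := max M 0 with hM'
  have key : ∀ T : ℝ, M' ≤ T →
      ‖B x₀ T - B x₁ T‖ ≤ 2 * (|C| * Real.exp (-δ * T)) * (x₁ - x₀) := by
    intro T hT
    have hT0 : 0 ≤ T := le_trans (le_max_right _ _) hT
    set z : ℂ := ⟨x₀, -T⟩ with hz
    set w : ℂ := ⟨x₁, T⟩ with hw
    have hD : DifferentiableOn ℂ h ([[z.re, w.re]] ×ℂ [[z.im, w.im]]) := by
      intro p hp
      rw [Complex.mem_reProdIm] at hp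
      have hp1 : p.re ∈ Set.Icc x₀ x₁ := by
        have := hp.1
        rwa [show z.re = x₀ from rfl, show w.re = x₁ from rfl, Set.uIcc_of_le hx] at this
      exact (hd p hp1).differentiableWithinAt
    have hrect := Complex.integral_boundary_rect_eq_zero_of_differentiableOn h z w hD
    rw [show z.re = x₀ from rfl, show w.re = x₁ from rfl, show z.im = -T from rfl,
      show w.im = T from rfl] at hrect
    set Hb : ℂ := ∫ u in x₀..x₁, h (u + ((-T : ℝ) : ℂ) * Complex.I) with hHb
    set Ht : ℂ := ∫ u in x₀..x₁, h (u + ((T : ℝ) : ℂ) * Complex.I) with hHt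
    have h2 : Hb - Ht + Complex.I * B x₁ T - Complex.I * B x₀ T = 0 := by
      simpa [smul_eq_mul] using hrect
    have heq : B x₀ T - B x₁ T = -Complex.I * (Hb - Ht) := by
      linear_combination Complex.I * h2 + (B x₀ T - B x₁ T) * Complex.I_sq
    have horiz : ∀ s : ℝ, |s| = T →
        ‖∫ u in x₀..x₁, h (u + (s : ℂ) * Complex.I)‖ ≤ |C| * Real.exp (-δ * T) * |x₁ - x₀| := by
      intro s hs
      apply intervalIntegral.norm_integral_le_of_norm_le_const
      intro u hu
      rw [Set.uIoc_of_le hx] at hu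
      have hu' : u ∈ Set.Icc x₀ x₁ := Set.Ioc_subset_Icc_self hu
      have hmem : ((u : ℂ) + (s : ℂ) * Complex.I).re ∈ Set.Icc x₀ x₁ := by simpa using hu'
      have him : ((u : ℂ) + (s : ℂ) * Complex.I).im = s := by simp
      have hM : M ≤ |((u : ℂ) + (s : ℂ) * Complex.I).im| := by
        rw [him, hs]; exact le_trans (le_max_left _ _) hT
      have hb' := hb _ hmem hM
      rw [him, hs] at hb'
      exact hb'.trans (mul_le_mul_of_nonneg_right (le_abs_self C) (Real.exp_nonneg _))
    rw [heq, norm_mul]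
    simp only [norm_neg, Complex.norm_I, one_mul]
    calc ‖Hb - Ht‖ ≤ ‖Hb‖ + ‖Ht‖ := norm_sub_le _ _
      _ ≤ |C| * Real.exp (-δ * T) * |x₁ - x₀| + |C| * Real.exp (-δ * T) * |x₁ - x₀| := by
          gcongr
          · exact horiz (-T) (by rw [abs_neg, _root_.abs_of_nonneg hT0])
          · exact horiz T (_root_.abs_of_nonneg hT0)
      _ = 2 * (|C| * Real.exp (-δ * T)) * (x₁ - x₀) := by
          rw [_root_.abs_of_nonneg (by linarith : (0:ℝ) ≤ x₁ - x₀)]; ring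
  have hlim0 : Tendsto (fun T : ℝ => B x₀ T - B x₁ T) atTop (𝓝 0) := by
    apply squeeze_zero_norm' (Filter.eventually_atTop.mpr ⟨M', key⟩)
    have h1 : Tendsto (fun T : ℝ => Real.exp (-δ * T)) atTop (𝓝 0) :=
      Real.tendsto_exp_atBot.comp
        ((tendsto_const_mul_atBot_of_neg (by linarith : -δ < 0)).mpr tendsto_id)
    have h2 : Tendsto (fun T : ℝ => 2 * (|C| * Real.exp (-δ * T)) * (x₁ - x₀)) atTop
        (𝓝 (2 * (|C| * 0) * (x₁ - x₀))) := ((h1.const_mul |C|).const_mul 2).mul_const _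
    simpa using h2
  have hlim : Tendsto (fun T : ℝ => B x₀ T - B x₁ T) atTop
      (𝓝 ((∫ y : ℝ, h (x₀ + y * Complex.I)) - ∫ y : ℝ, h (x₁ + y * Complex.I))) :=
    lim₀.sub lim₁
  exact sub_eq_zero.mp (tendsto_nhds_unique hlim hlim0)
lemma core_shift (t : ℝ) (ht2 : t < 0) (τ : ℂ) (hτ : τ = (t : ℂ)) (f g : ℂ → ℂ) (εf εg : ℝ)
    (hf : HasGrowthRate f εf) (hg : HasGrowthRate g εg) (hεsum : εf + εg < 2 * Real.pi * t)
    (hfa : ∀ z : ℂ, |z.re| ≤ 1 → AnalyticAt ℂ f z)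
    (hga : ∀ z : ℂ, |z.re| ≤ 1 → AnalyticAt ℂ g z)
    (s u v x₀ x₁ : ℝ) (hs : |s| ≤ 1) (hx : x₀ ≤ x₁)
    (hu : ∀ x ∈ Set.Icc x₀ x₁, |x + u| ≤ 1) (hv : ∀ x ∈ Set.Icc x₀ x₁, |x + v| ≤ 1) :
    (∀ x ∈ Set.Icc x₀ x₁, Integrable (fun y : ℝ =>
      qpow τ (s * ((x : ℂ) + y * Complex.I)) * f ((x : ℂ) + y * Complex.I + u) *
        g ((x : ℂ) + y * Complex.I + v))) ∧
    (∫ y : ℝ, qpow τ (s * ((x₀ : ℂ) + y * Complex.I)) * f ((x₀ : ℂ) + y * Complex.I + u) *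
        g ((x₀ : ℂ) + y * Complex.I + v)) =
      ∫ y : ℝ, qpow τ (s * ((x₁ : ℂ) + y * Complex.I)) * f ((x₁ : ℂ) + y * Complex.I + u) *
        g ((x₁ : ℂ) + y * Complex.I + v) := by
  have hπ := Real.pi_pos
  obtain ⟨Cf, Mf, hCf⟩ := hf.2 (Set.Icc (x₀ + u) (x₁ + u)) isCompact_Icc
  obtain ⟨Cg, Mg, hCg⟩ := hg.2 (Set.Icc (x₀ + v) (x₁ + v)) isCompact_Icc
  set δ : ℝ := 2 * Real.pi * t - (εf + εg) with hδdef
  have hδ : 0 < δ := by simp only [hδdef]; linarith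
  set C : ℝ := |Cf| * |Cg| with hCdef
  set M : ℝ := max Mf Mg with hMdef
  have hd : ∀ z : ℂ, z.re ∈ Set.Icc x₀ x₁ → DifferentiableAt ℂ
      (fun z => qpow τ (s * z) * f (z + u) * g (z + v)) z := by
    intro z hz
    have h1 : DifferentiableAt ℂ (fun z : ℂ => qpow τ (s * z)) z := by
      unfold qpow; fun_prop
    have h2 : DifferentiableAt ℂ (fun z : ℂ => f (z + u)) z := by
      have ha : AnalyticAt ℂ f (z + u) := by
        apply hfa
        have : (z + (u : ℂ)).re = z.re + u := by simp
        rw [this]; exact hu z.re hz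
      exact ha.differentiableAt.comp z (differentiableAt_id.add_const _)
    have h3 : DifferentiableAt ℂ (fun z : ℂ => g (z + v)) z := by
      have ha : AnalyticAt ℂ g (z + v) := by
        apply hga
        have : (z + (v : ℂ)).re = z.re + v := by simp
        rw [this]; exact hv z.re hz
      exact ha.differentiableAt.comp z (differentiableAt_id.add_const _)
    exact (h1.mul h2).mul h3
  have hb : ∀ z : ℂ, z.re ∈ Set.Icc x₀ x₁ → M ≤ |z.im| →
      ‖qpow τ (s * z) * f (z + u) * g (z + v)‖ ≤ C * Real.exp (-δ * |z.im|) := by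
    intro z hz hM
    have hq : ‖qpow τ ((s : ℂ) * z)‖ ≤ Real.exp (2 * Real.pi * (-t) * |z.im|) := by
      rw [qpow, Complex.norm_exp]
      apply Real.exp_le_exp.mpr
      have hre : (2 * (Real.pi : ℂ) * Complex.I * τ * ((s : ℂ) * z)).re =
          -(2 * Real.pi * t * (s * z.im)) := by
        rw [hτ]
        simp [Complex.mul_re, Complex.mul_im]
      rw [hre]
      have h1 : |s * z.im| ≤ |z.im| := by
        rw [abs_mul]; exact mul_le_of_le_one_left (abs_nonneg _) hs
      have h2a : s * z.im ≤ |z.im| := le_trans (le_abs_self _) h1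
      have hpos : (0:ℝ) ≤ 2 * Real.pi * (-t) := by nlinarith
      nlinarith [mul_le_mul_of_nonneg_left h2a hpos]
    have hfz : ‖f (z + u)‖ ≤ |Cf| * Real.exp (εf * |z.im|) := by
      have h1 : (z + (u : ℂ)).re ∈ Set.Icc (x₀ + u) (x₁ + u) := by
        simp only [Complex.add_re, Complex.ofReal_re]
        exact ⟨by linarith [hz.1], by linarith [hz.2]⟩
      have h2 : Mf ≤ |(z + (u : ℂ)).im| := by
        simp only [Complex.add_im, Complex.ofReal_im, add_zero]
        exact le_trans (le_max_left _ _) hM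
      have := hCf _ h1 h2
      simp only [Complex.add_im, Complex.ofReal_im, add_zero] at this
      exact this.trans (mul_le_mul_of_nonneg_right (le_abs_self _) (Real.exp_nonneg _))
    have hgz : ‖g (z + v)‖ ≤ |Cg| * Real.exp (εg * |z.im|) := by
      have h1 : (z + (v : ℂ)).re ∈ Set.Icc (x₀ + v) (x₁ + v) := by
        simp only [Complex.add_re, Complex.ofReal_re]
        exact ⟨by linarith [hz.1], by linarith [hz.2]⟩
      have h2 : Mg ≤ |(z + (v : ℂ)).im| := by
        simp only [Complex.add_im, Complex.ofReal_im, add_zero]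
        exact le_trans (le_max_right _ _) hM
      have := hCg _ h1 h2
      simp only [Complex.add_im, Complex.ofReal_im, add_zero] at this
      exact this.trans (mul_le_mul_of_nonneg_right (le_abs_self _) (Real.exp_nonneg _))
    have hexp : Real.exp (2 * Real.pi * (-t) * |z.im|) * (|Cf| * Real.exp (εf * |z.im|)) *
        (|Cg| * Real.exp (εg * |z.im|)) = C * Real.exp (-δ * |z.im|) := by
      rw [hCdef, show (-δ * |z.im|) = 2 * Real.pi * (-t) * |z.im| + εf * |z.im| + εg * |z.im| by
        rw [hδdef]; ring]
      rw [Real.exp_add, Real.exp_add]; ring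
    calc ‖qpow τ ((s : ℂ) * z) * f (z + u) * g (z + v)‖
        = ‖qpow τ ((s : ℂ) * z)‖ * ‖f (z + u)‖ * ‖g (z + v)‖ := by rw [norm_mul, norm_mul]
      _ ≤ Real.exp (2 * Real.pi * (-t) * |z.im|) * (|Cf| * Real.exp (εf * |z.im|)) *
          (|Cg| * Real.exp (εg * |z.im|)) := by
          exact mul_le_mul (mul_le_mul hq hfz (norm_nonneg _) (Real.exp_nonneg _)) hgz
            (norm_nonneg _) (by positivity)
      _ = C * Real.exp (-δ * |z.im|) := hexp
  constructor
  · intro x hxm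
    exact vert_line_integrable (fun z => qpow τ (s * z) * f (z + u) * g (z + v)) x₀ x₁ hd
      C δ M hδ hb x hxm
  · exact vert_shift (fun z => qpow τ (s * z) * f (z + u) * g (z + v)) x₀ x₁ hx hd
      C δ M hδ hb

/-- The bilinear pairing over the imaginary axis for the principal series of
`U_q(sl(2,ℝ))` with `|q| = 1`: all the integrals converge absolutely, and
`∫(X^±_λ f)·g = −∫f·(X^±_{−λ}g)` and `∫f(z+1)g(z)dz = ∫f(z)g(z−1)dz`. -/
theorem bilinear_pairing_q_modulus_one (t : ℝ) (ht1 : -(1 / 2 : ℝ) < t) (ht2 : t < 0)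
    (τ : ℂ) (hτ : τ = (t : ℂ)) (lam : ℂ) (f g : ℂ → ℂ) (εf εg : ℝ)
    (hf : HasGrowthRate f εf) (hg : HasGrowthRate g εg)
    (hεsum : εf + εg < 2 * Real.pi * t)
    (hfa : ∀ z : ℂ, |z.re| ≤ 1 → AnalyticAt ℂ f z)
    (hga : ∀ z : ℂ, |z.re| ≤ 1 → AnalyticAt ℂ g z) :
    Integrable (fun y : ℝ => Xplus τ lam f (Complex.I * y) * g (Complex.I * y)) ∧
    Integrable (fun y : ℝ => f (Complex.I * y) * Xplus τ (-lam) g (Complex.I * y)) ∧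
    Integrable (fun y : ℝ => Xminus τ lam f (Complex.I * y) * g (Complex.I * y)) ∧
    Integrable (fun y : ℝ => f (Complex.I * y) * Xminus τ (-lam) g (Complex.I * y)) ∧
    Integrable (fun y : ℝ => f (Complex.I * y + 1) * g (Complex.I * y)) ∧
    Integrable (fun y : ℝ => f (Complex.I * y) * g (Complex.I * y - 1)) ∧
    (∫ y : ℝ, Xplus τ lam f (Complex.I * y) * g (Complex.I * y)) =
      -∫ y : ℝ, f (Complex.I * y) * Xplus τ (-lam) g (Complex.I * y) ∧
    (∫ y : ℝ, Xminus τ lam f (Complex.I * y) * g (Complex.I * y)) =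
      -∫ y : ℝ, f (Complex.I * y) * Xminus τ (-lam) g (Complex.I * y) ∧
    (∫ y : ℝ, f (Complex.I * y + 1) * g (Complex.I * y)) =
      ∫ y : ℝ, f (Complex.I * y) * g (Complex.I * y - 1) := by
  -- strip hypotheses
  have hm10 : ∀ x ∈ Set.Icc (-1 : ℝ) 0, |x + (0 : ℝ)| ≤ 1 := by
    intro x hx; simp only [Set.mem_Icc] at hx; rw [abs_le]; constructor <;> linarith [hx.1, hx.2]
  have hm11 : ∀ x ∈ Set.Icc (-1 : ℝ) 0, |x + (1 : ℝ)| ≤ 1 := by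
    intro x hx; simp only [Set.mem_Icc] at hx; rw [abs_le]; constructor <;> linarith [hx.1, hx.2]
  have h010 : ∀ x ∈ Set.Icc (0 : ℝ) 1, |x + (0 : ℝ)| ≤ 1 := by
    intro x hx; simp only [Set.mem_Icc] at hx; rw [abs_le]; constructor <;> linarith [hx.1, hx.2]
  have h01m1 : ∀ x ∈ Set.Icc (0 : ℝ) 1, |x + (-1 : ℝ)| ≤ 1 := by
    intro x hx; simp only [Set.mem_Icc] at hx; rw [abs_le]; constructor <;> linarith [hx.1, hx.2]
  have memm1 : (-1 : ℝ) ∈ Set.Icc (-1 : ℝ) 0 := by norm_num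
  have mem0a : (0 : ℝ) ∈ Set.Icc (-1 : ℝ) 0 := by norm_num
  have mem0b : (0 : ℝ) ∈ Set.Icc (0 : ℝ) 1 := by norm_num
  have mem1 : (1 : ℝ) ∈ Set.Icc (0 : ℝ) 1 := by norm_num
  obtain ⟨i1, e1⟩ := core_shift t ht2 τ hτ f g εf εg hf hg hεsum hfa hga
    1 0 1 (-1) 0 (by norm_num) (by norm_num) hm10 hm11
  obtain ⟨i2, e2⟩ := core_shift t ht2 τ hτ f g εf εg hf hg hεsum hfa hga
    1 0 (-1) 0 1 (by norm_num) (by norm_num) h010 h01m1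
  obtain ⟨i3, e3⟩ := core_shift t ht2 τ hτ f g εf εg hf hg hεsum hfa hga
    (-1) 0 (-1) 0 1 (by norm_num) (by norm_num) h010 h01m1
  obtain ⟨i4, e4⟩ := core_shift t ht2 τ hτ f g εf εg hf hg hεsum hfa hga
    (-1) 0 1 (-1) 0 (by norm_num) (by norm_num) hm10 hm11
  obtain ⟨i5, e5⟩ := core_shift t ht2 τ hτ f g εf εg hf hg hεsum hfa hga
    0 0 (-1) 0 1 (by norm_num) (by norm_num) h010 h01m1
  have h1 := qpow_one_mul_neg_one τ
  -- transfer lemmas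
  have t1a : (fun y : ℝ => qpow τ (Complex.I * ↑y) * f (Complex.I * ↑y - 1) * g (Complex.I * ↑y))
      = fun y : ℝ => qpow τ 1 * (qpow τ (((1 : ℝ) : ℂ) * (((-1 : ℝ) : ℂ) + ↑y * Complex.I)) *
        f (((-1 : ℝ) : ℂ) + ↑y * Complex.I + ((0 : ℝ) : ℂ)) *
        g (((-1 : ℝ) : ℂ) + ↑y * Complex.I + ((1 : ℝ) : ℂ))) := by
    funext y
    rw [show (((1 : ℝ) : ℂ) * (((-1 : ℝ) : ℂ) + ↑y * Complex.I)) = (-1 : ℂ) + Complex.I * ↑y by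
        push_cast; ring,
      qpow_add τ (-1) (Complex.I * ↑y),
      show (((-1 : ℝ) : ℂ) + ↑y * Complex.I + ((0 : ℝ) : ℂ)) = Complex.I * ↑y - 1 by
        push_cast; ring,
      show (((-1 : ℝ) : ℂ) + ↑y * Complex.I + ((1 : ℝ) : ℂ)) = Complex.I * ↑y by
        push_cast; ring]
    linear_combination (-(qpow τ (Complex.I * ↑y) * f (Complex.I * ↑y - 1) *
      g (Complex.I * ↑y))) * h1
  have t1b : (fun y : ℝ => qpow τ (Complex.I * ↑y) * f (Complex.I * ↑y) * g (Complex.I * ↑y + 1))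
      = fun y : ℝ => qpow τ (((1 : ℝ) : ℂ) * (((0 : ℝ) : ℂ) + ↑y * Complex.I)) *
        f (((0 : ℝ) : ℂ) + ↑y * Complex.I + ((0 : ℝ) : ℂ)) *
        g (((0 : ℝ) : ℂ) + ↑y * Complex.I + ((1 : ℝ) : ℂ)) := by
    funext y
    rw [show (((1 : ℝ) : ℂ) * (((0 : ℝ) : ℂ) + ↑y * Complex.I)) = Complex.I * ↑y by
        push_cast; ring,
      show (((0 : ℝ) : ℂ) + ↑y * Complex.I + ((0 : ℝ) : ℂ)) = Complex.I * ↑y by push_cast; ring,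
      show (((0 : ℝ) : ℂ) + ↑y * Complex.I + ((1 : ℝ) : ℂ)) = Complex.I * ↑y + 1 by
        push_cast; ring]
  have t2a : (fun y : ℝ => qpow τ (Complex.I * ↑y) * f (Complex.I * ↑y + 1) * g (Complex.I * ↑y))
      = fun y : ℝ => qpow τ (-1) * (qpow τ (((1 : ℝ) : ℂ) * (((1 : ℝ) : ℂ) + ↑y * Complex.I)) *
        f (((1 : ℝ) : ℂ) + ↑y * Complex.I + ((0 : ℝ) : ℂ)) *
        g (((1 : ℝ) : ℂ) + ↑y * Complex.I + ((-1 : ℝ) : ℂ))) := by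
    funext y
    rw [show (((1 : ℝ) : ℂ) * (((1 : ℝ) : ℂ) + ↑y * Complex.I)) = (1 : ℂ) + Complex.I * ↑y by
        push_cast; ring,
      qpow_add τ 1 (Complex.I * ↑y),
      show (((1 : ℝ) : ℂ) + ↑y * Complex.I + ((0 : ℝ) : ℂ)) = Complex.I * ↑y + 1 by
        push_cast; ring,
      show (((1 : ℝ) : ℂ) + ↑y * Complex.I + ((-1 : ℝ) : ℂ)) = Complex.I * ↑y by
        push_cast; ring]
    linear_combination (-(qpow τ (Complex.I * ↑y) * f (Complex.I * ↑y + 1) *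
      g (Complex.I * ↑y))) * h1
  have t2b : (fun y : ℝ => qpow τ (Complex.I * ↑y) * f (Complex.I * ↑y) * g (Complex.I * ↑y - 1))
      = fun y : ℝ => qpow τ (((1 : ℝ) : ℂ) * (((0 : ℝ) : ℂ) + ↑y * Complex.I)) *
        f (((0 : ℝ) : ℂ) + ↑y * Complex.I + ((0 : ℝ) : ℂ)) *
        g (((0 : ℝ) : ℂ) + ↑y * Complex.I + ((-1 : ℝ) : ℂ)) := by
    funext y
    rw [show (((1 : ℝ) : ℂ) * (((0 : ℝ) : ℂ) + ↑y * Complex.I)) = Complex.I * ↑y by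
        push_cast; ring,
      show (((0 : ℝ) : ℂ) + ↑y * Complex.I + ((0 : ℝ) : ℂ)) = Complex.I * ↑y by push_cast; ring,
      show (((0 : ℝ) : ℂ) + ↑y * Complex.I + ((-1 : ℝ) : ℂ)) = Complex.I * ↑y - 1 by
        push_cast; ring]
  have t3a : (fun y : ℝ => qpow τ (-(Complex.I * ↑y)) * f (Complex.I * ↑y + 1) *
        g (Complex.I * ↑y))
      = fun y : ℝ => qpow τ 1 * (qpow τ (((-1 : ℝ) : ℂ) * (((1 : ℝ) : ℂ) + ↑y * Complex.I)) *
        f (((1 : ℝ) : ℂ) + ↑y * Complex.I + ((0 : ℝ) : ℂ)) *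
        g (((1 : ℝ) : ℂ) + ↑y * Complex.I + ((-1 : ℝ) : ℂ))) := by
    funext y
    rw [show (((-1 : ℝ) : ℂ) * (((1 : ℝ) : ℂ) + ↑y * Complex.I)) =
        (-1 : ℂ) + -(Complex.I * ↑y) by push_cast; ring,
      qpow_add τ (-1) (-(Complex.I * ↑y)),
      show (((1 : ℝ) : ℂ) + ↑y * Complex.I + ((0 : ℝ) : ℂ)) = Complex.I * ↑y + 1 by
        push_cast; ring,
      show (((1 : ℝ) : ℂ) + ↑y * Complex.I + ((-1 : ℝ) : ℂ)) = Complex.I * ↑y by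
        push_cast; ring]
    linear_combination (-(qpow τ (-(Complex.I * ↑y)) * f (Complex.I * ↑y + 1) *
      g (Complex.I * ↑y))) * h1
  have t3b : (fun y : ℝ => qpow τ (-(Complex.I * ↑y)) * f (Complex.I * ↑y) *
        g (Complex.I * ↑y - 1))
      = fun y : ℝ => qpow τ (((-1 : ℝ) : ℂ) * (((0 : ℝ) : ℂ) + ↑y * Complex.I)) *
        f (((0 : ℝ) : ℂ) + ↑y * Complex.I + ((0 : ℝ) : ℂ)) *
        g (((0 : ℝ) : ℂ) + ↑y * Complex.I + ((-1 : ℝ) : ℂ)) := by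
    funext y
    rw [show (((-1 : ℝ) : ℂ) * (((0 : ℝ) : ℂ) + ↑y * Complex.I)) = -(Complex.I * ↑y) by
        push_cast; ring,
      show (((0 : ℝ) : ℂ) + ↑y * Complex.I + ((0 : ℝ) : ℂ)) = Complex.I * ↑y by push_cast; ring,
      show (((0 : ℝ) : ℂ) + ↑y * Complex.I + ((-1 : ℝ) : ℂ)) = Complex.I * ↑y - 1 by
        push_cast; ring]
  have t4a : (fun y : ℝ => qpow τ (-(Complex.I * ↑y)) * f (Complex.I * ↑y - 1) *
        g (Complex.I * ↑y))
      = fun y : ℝ => qpow τ (-1) * (qpow τ (((-1 : ℝ) : ℂ) * (((-1 : ℝ) : ℂ) + ↑y * Complex.I)) *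
        f (((-1 : ℝ) : ℂ) + ↑y * Complex.I + ((0 : ℝ) : ℂ)) *
        g (((-1 : ℝ) : ℂ) + ↑y * Complex.I + ((1 : ℝ) : ℂ))) := by
    funext y
    rw [show (((-1 : ℝ) : ℂ) * (((-1 : ℝ) : ℂ) + ↑y * Complex.I)) =
        (1 : ℂ) + -(Complex.I * ↑y) by push_cast; ring,
      qpow_add τ 1 (-(Complex.I * ↑y)),
      show (((-1 : ℝ) : ℂ) + ↑y * Complex.I + ((0 : ℝ) : ℂ)) = Complex.I * ↑y - 1 by
        push_cast; ring,
      show (((-1 : ℝ) : ℂ) + ↑y * Complex.I + ((1 : ℝ) : ℂ)) = Complex.I * ↑y by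
        push_cast; ring]
    linear_combination (-(qpow τ (-(Complex.I * ↑y)) * f (Complex.I * ↑y - 1) *
      g (Complex.I * ↑y))) * h1
  have t4b : (fun y : ℝ => qpow τ (-(Complex.I * ↑y)) * f (Complex.I * ↑y) *
        g (Complex.I * ↑y + 1))
      = fun y : ℝ => qpow τ (((-1 : ℝ) : ℂ) * (((0 : ℝ) : ℂ) + ↑y * Complex.I)) *
        f (((0 : ℝ) : ℂ) + ↑y * Complex.I + ((0 : ℝ) : ℂ)) *
        g (((0 : ℝ) : ℂ) + ↑y * Complex.I + ((1 : ℝ) : ℂ)) := by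
    funext y
    rw [show (((-1 : ℝ) : ℂ) * (((0 : ℝ) : ℂ) + ↑y * Complex.I)) = -(Complex.I * ↑y) by
        push_cast; ring,
      show (((0 : ℝ) : ℂ) + ↑y * Complex.I + ((0 : ℝ) : ℂ)) = Complex.I * ↑y by push_cast; ring,
      show (((0 : ℝ) : ℂ) + ↑y * Complex.I + ((1 : ℝ) : ℂ)) = Complex.I * ↑y + 1 by
        push_cast; ring]
  have t5a : (fun y : ℝ => f (Complex.I * ↑y + 1) * g (Complex.I * ↑y))
      = fun y : ℝ => qpow τ (((0 : ℝ) : ℂ) * (((1 : ℝ) : ℂ) + ↑y * Complex.I)) *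
        f (((1 : ℝ) : ℂ) + ↑y * Complex.I + ((0 : ℝ) : ℂ)) *
        g (((1 : ℝ) : ℂ) + ↑y * Complex.I + ((-1 : ℝ) : ℂ)) := by
    funext y
    rw [show (((0 : ℝ) : ℂ) * (((1 : ℝ) : ℂ) + ↑y * Complex.I)) = 0 by push_cast; ring,
      qpow_zero,
      show (((1 : ℝ) : ℂ) + ↑y * Complex.I + ((0 : ℝ) : ℂ)) = Complex.I * ↑y + 1 by
        push_cast; ring,
      show (((1 : ℝ) : ℂ) + ↑y * Complex.I + ((-1 : ℝ) : ℂ)) = Complex.I * ↑y by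
        push_cast; ring, one_mul]
  have t5b : (fun y : ℝ => f (Complex.I * ↑y) * g (Complex.I * ↑y - 1))
      = fun y : ℝ => qpow τ (((0 : ℝ) : ℂ) * (((0 : ℝ) : ℂ) + ↑y * Complex.I)) *
        f (((0 : ℝ) : ℂ) + ↑y * Complex.I + ((0 : ℝ) : ℂ)) *
        g (((0 : ℝ) : ℂ) + ↑y * Complex.I + ((-1 : ℝ) : ℂ)) := by
    funext y
    rw [show (((0 : ℝ) : ℂ) * (((0 : ℝ) : ℂ) + ↑y * Complex.I)) = 0 by push_cast; ring,
      qpow_zero,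
      show (((0 : ℝ) : ℂ) + ↑y * Complex.I + ((0 : ℝ) : ℂ)) = Complex.I * ↑y by push_cast; ring,
      show (((0 : ℝ) : ℂ) + ↑y * Complex.I + ((-1 : ℝ) : ℂ)) = Complex.I * ↑y - 1 by
        push_cast; ring, one_mul]
  -- integrability of the basic pieces
  have I_S1 : Integrable (fun y : ℝ => qpow τ (Complex.I * ↑y) * f (Complex.I * ↑y - 1) *
      g (Complex.I * ↑y)) := by rw [t1a]; exact (i1 (-1) memm1).const_mul _
  have I_A1 : Integrable (fun y : ℝ => qpow τ (Complex.I * ↑y) * f (Complex.I * ↑y) *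
      g (Complex.I * ↑y + 1)) := by rw [t1b]; exact i1 0 mem0a
  have I_S2 : Integrable (fun y : ℝ => qpow τ (Complex.I * ↑y) * f (Complex.I * ↑y + 1) *
      g (Complex.I * ↑y)) := by rw [t2a]; exact (i2 1 mem1).const_mul _
  have I_A2 : Integrable (fun y : ℝ => qpow τ (Complex.I * ↑y) * f (Complex.I * ↑y) *
      g (Complex.I * ↑y - 1)) := by rw [t2b]; exact i2 0 mem0b
  have I_S3 : Integrable (fun y : ℝ => qpow τ (-(Complex.I * ↑y)) * f (Complex.I * ↑y + 1) *
      g (Complex.I * ↑y)) := by rw [t3a]; exact (i3 1 mem1).const_mul _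
  have I_A4 : Integrable (fun y : ℝ => qpow τ (-(Complex.I * ↑y)) * f (Complex.I * ↑y) *
      g (Complex.I * ↑y - 1)) := by rw [t3b]; exact i3 0 mem0b
  have I_S4 : Integrable (fun y : ℝ => qpow τ (-(Complex.I * ↑y)) * f (Complex.I * ↑y - 1) *
      g (Complex.I * ↑y)) := by rw [t4a]; exact (i4 (-1) memm1).const_mul _
  have I_A3 : Integrable (fun y : ℝ => qpow τ (-(Complex.I * ↑y)) * f (Complex.I * ↑y) *
      g (Complex.I * ↑y + 1)) := by rw [t4b]; exact i4 0 mem0a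
  have I_T1 : Integrable (fun y : ℝ => f (Complex.I * ↑y + 1) * g (Complex.I * ↑y)) := by
    rw [t5a]; exact i5 1 mem1
  have I_T2 : Integrable (fun y : ℝ => f (Complex.I * ↑y) * g (Complex.I * ↑y - 1)) := by
    rw [t5b]; exact i5 0 mem0b
  -- shifted-integral identities
  have S1eq : (∫ y : ℝ, qpow τ (Complex.I * ↑y) * f (Complex.I * ↑y - 1) * g (Complex.I * ↑y))
      = qpow τ 1 * ∫ y : ℝ, qpow τ (Complex.I * ↑y) * f (Complex.I * ↑y) *
        g (Complex.I * ↑y + 1) := by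
    rw [t1a, MeasureTheory.integral_const_mul, e1, t1b]
  have S2eq : (∫ y : ℝ, qpow τ (Complex.I * ↑y) * f (Complex.I * ↑y + 1) * g (Complex.I * ↑y))
      = qpow τ (-1) * ∫ y : ℝ, qpow τ (Complex.I * ↑y) * f (Complex.I * ↑y) *
        g (Complex.I * ↑y - 1) := by
    rw [t2a, MeasureTheory.integral_const_mul, ← e2, t2b]
  have S3eq : (∫ y : ℝ, qpow τ (-(Complex.I * ↑y)) * f (Complex.I * ↑y + 1) * g (Complex.I * ↑y))
      = qpow τ 1 * ∫ y : ℝ, qpow τ (-(Complex.I * ↑y)) * f (Complex.I * ↑y) *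
        g (Complex.I * ↑y - 1) := by
    rw [t3a, MeasureTheory.integral_const_mul, ← e3, t3b]
  have S4eq : (∫ y : ℝ, qpow τ (-(Complex.I * ↑y)) * f (Complex.I * ↑y - 1) * g (Complex.I * ↑y))
      = qpow τ (-1) * ∫ y : ℝ, qpow τ (-(Complex.I * ↑y)) * f (Complex.I * ↑y) *
        g (Complex.I * ↑y + 1) := by
    rw [t4a, MeasureTheory.integral_const_mul, e4, t4b]
  have S5eq : (∫ y : ℝ, f (Complex.I * ↑y + 1) * g (Complex.I * ↑y))
      = ∫ y : ℝ, f (Complex.I * ↑y) * g (Complex.I * ↑y - 1) := by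
    rw [t5a, ← e5, t5b]
  -- expansion of the X operators
  have hXf : (fun y : ℝ => Xplus τ lam f (Complex.I * ↑y) * g (Complex.I * ↑y))
      = fun y : ℝ =>
        (qpow τ (-(1 / 2) - Complex.I * lam) / (qpow τ (-1) - qpow τ 1)) *
          (qpow τ (Complex.I * ↑y) * f (Complex.I * ↑y - 1) * g (Complex.I * ↑y)) -
        (qpow τ (1 / 2 + Complex.I * lam) / (qpow τ (-1) - qpow τ 1)) *
          (qpow τ (Complex.I * ↑y) * f (Complex.I * ↑y + 1) * g (Complex.I * ↑y)) := by
    funext y; simp only [Xplus]; ring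
  have hXg : (fun y : ℝ => f (Complex.I * ↑y) * Xplus τ (-lam) g (Complex.I * ↑y))
      = fun y : ℝ =>
        (qpow τ (-(1 / 2) - Complex.I * -lam) / (qpow τ (-1) - qpow τ 1)) *
          (qpow τ (Complex.I * ↑y) * f (Complex.I * ↑y) * g (Complex.I * ↑y - 1)) -
        (qpow τ (1 / 2 + Complex.I * -lam) / (qpow τ (-1) - qpow τ 1)) *
          (qpow τ (Complex.I * ↑y) * f (Complex.I * ↑y) * g (Complex.I * ↑y + 1)) := by
    funext y; simp only [Xplus]; ring
  have hMf : (fun y : ℝ => Xminus τ lam f (Complex.I * ↑y) * g (Complex.I * ↑y))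
      = fun y : ℝ =>
        (qpow τ (-(1 / 2) - Complex.I * lam) / (qpow τ (-1) - qpow τ 1)) *
          (qpow τ (-(Complex.I * ↑y)) * f (Complex.I * ↑y + 1) * g (Complex.I * ↑y)) -
        (qpow τ (1 / 2 + Complex.I * lam) / (qpow τ (-1) - qpow τ 1)) *
          (qpow τ (-(Complex.I * ↑y)) * f (Complex.I * ↑y - 1) * g (Complex.I * ↑y)) := by
    funext y; simp only [Xminus]; ring
  have hMg : (fun y : ℝ => f (Complex.I * ↑y) * Xminus τ (-lam) g (Complex.I * ↑y))
      = fun y : ℝ =>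
        (qpow τ (-(1 / 2) - Complex.I * -lam) / (qpow τ (-1) - qpow τ 1)) *
          (qpow τ (-(Complex.I * ↑y)) * f (Complex.I * ↑y) * g (Complex.I * ↑y + 1)) -
        (qpow τ (1 / 2 + Complex.I * -lam) / (qpow τ (-1) - qpow τ 1)) *
          (qpow τ (-(Complex.I * ↑y)) * f (Complex.I * ↑y) * g (Complex.I * ↑y - 1)) := by
    funext y; simp only [Xminus]; ring
  -- coefficient identities
  have hAB1 : qpow τ (-(1 / 2) - Complex.I * lam) * qpow τ 1
      = qpow τ (1 / 2 + Complex.I * -lam) := by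
    rw [← qpow_add]; congr 1; ring
  have hAB2 : qpow τ (1 / 2 + Complex.I * lam) * qpow τ (-1)
      = qpow τ (-(1 / 2) - Complex.I * -lam) := by
    rw [← qpow_add]; congr 1; ring
  refine ⟨?_, ?_, ?_, ?_, ?_, ?_, ?_, ?_, ?_⟩
  · rw [hXf]; exact (I_S1.const_mul _).sub (I_S2.const_mul _)
  · rw [hXg]; exact (I_A2.const_mul _).sub (I_A1.const_mul _)
  · rw [hMf]; exact (I_S3.const_mul _).sub (I_S4.const_mul _)
  · rw [hMg]; exact (I_A3.const_mul _).sub (I_A4.const_mul _)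
  · exact I_T1
  · exact I_T2
  · rw [hXf, hXg, MeasureTheory.integral_sub (I_S1.const_mul _) (I_S2.const_mul _),
      MeasureTheory.integral_sub (I_A2.const_mul _) (I_A1.const_mul _),
      MeasureTheory.integral_const_mul, MeasureTheory.integral_const_mul,
      MeasureTheory.integral_const_mul, MeasureTheory.integral_const_mul, S1eq, S2eq]
    linear_combination
      ((∫ y : ℝ, qpow τ (Complex.I * ↑y) * f (Complex.I * ↑y) * g (Complex.I * ↑y + 1)) /
        (qpow τ (-1) - qpow τ 1)) * hAB1 -
      ((∫ y : ℝ, qpow τ (Complex.I * ↑y) * f (Complex.I * ↑y) * g (Complex.I * ↑y - 1)) /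
        (qpow τ (-1) - qpow τ 1)) * hAB2
  · rw [hMf, hMg, MeasureTheory.integral_sub (I_S3.const_mul _) (I_S4.const_mul _),
      MeasureTheory.integral_sub (I_A3.const_mul _) (I_A4.const_mul _),
      MeasureTheory.integral_const_mul, MeasureTheory.integral_const_mul,
      MeasureTheory.integral_const_mul, MeasureTheory.integral_const_mul, S3eq, S4eq]
    linear_combination
      ((∫ y : ℝ, qpow τ (-(Complex.I * ↑y)) * f (Complex.I * ↑y) * g (Complex.I * ↑y - 1)) /
        (qpow τ (-1) - qpow τ 1)) * hAB1 -
      ((∫ y : ℝ, qpow τ (-(Complex.I * ↑y)) * f (Complex.I * ↑y) * g (Complex.I * ↑y + 1)) /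
        (qpow τ (-1) - qpow τ 1)) * hAB2
  · exact S5eq
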